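/- Let a < b be positive integers with gcd(a,b) = 1, and let E be the equation a·x + b·y = z. Let b⁻¹ be any integer with b·b⁻¹ ≡ 1 (mod a) and let a⁻¹ be any integer with a·a⁻¹ ≡ 1 (mod b). Then for every positive integer n, M_E(n) ≤ Σ_{z = a+b}^{⌊n/(a(a+b))⌋} ( z/(ab) − {b⁻¹·z/a} − {a⁻¹·z/b} + 1 ), where {x} = x − ⌊x⌋ denotes the fractional part of a real number x and the sum is taken to be 0 when ⌊n/(a(a+b))⌋ < a+b. -/

import Mathlib

lemma perz_aux (a b : ℕ) (ha : 0 < a) (hb : 0 < b) (binv ainv : ℤ)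
    (hbinv : (b : ℤ) * binv ≡ 1 [ZMOD (a : ℤ)])
    (hainv : (a : ℤ) * ainv ≡ 1 [ZMOD (b : ℤ)])
    (n z : ℕ) (hz : 0 < z) :
    (((( Finset.Icc 1 n) ×ˢ (Finset.Icc 1 n) ×ˢ (Finset.Icc 1 n)).filter
      (fun p => a * p.1 + b * p.2.1 = p.2.2 ∧ p.2.2 = z)).card : ℚ)
      ≤ (z : ℚ) / ((a : ℚ) * b)
          - Int.fract (((binv * (z : ℤ) : ℤ) : ℚ) / (a : ℚ))
          - Int.fract (((ainv * (z : ℤ) : ℤ) : ℚ) / (b : ℚ)) + 1 := by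
  have ha' : (0:ℤ) < a := by exact_mod_cast ha
  have hb' : (0:ℤ) < b := by exact_mod_cast hb
  set r : ℤ := (ainv * z) % b with hr
  have hr0 : 0 ≤ r := Int.emod_nonneg _ hb'.ne'
  have hrb : r < b := Int.emod_lt_of_pos _ hb'
  have hbd1 : (b:ℤ) ∣ 1 - (a:ℤ) * ainv := hainv.dvd
  have hbd2 : (b:ℤ) ∣ ainv * z - r := Int.dvd_self_sub_of_emod_eq rfl
  have hdvd : (b:ℤ) ∣ (z:ℤ) - a * r := by
    obtain ⟨c, hc⟩ := hbd1
    obtain ⟨e, he⟩ := hbd2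
    exact ⟨z * c + a * e, by linear_combination (z:ℤ) * hc + (a:ℤ) * he⟩
  set m : ℤ := ((z:ℤ) - a * r) / b with hmdef
  have hm : (z:ℤ) = a * r + b * m := by
    have h := Int.ediv_mul_cancel hdvd
    linear_combination -h
  have had : (a:ℤ) ∣ binv * z - m := by
    obtain ⟨c, hc⟩ := hbinv.dvd
    exact ⟨binv * r - m * c, by linear_combination binv * hm - m * hc⟩
  set d : ℤ := m / a with hd
  have hmd : m = a * d + m % a := (Int.mul_ediv_add_emod m a).symm
  have hs : (binv * (z:ℤ)) % a = m % a := (Int.modEq_iff_dvd.mpr had).symm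
  have hsmod : 0 ≤ m % a := Int.emod_nonneg _ ha'.ne'
  -- fract computations
  have hf1 : Int.fract (((binv * (z : ℤ) : ℤ) : ℚ) / (a : ℚ)) = ((m % a : ℤ):ℚ) / (a:ℚ) := by
    rw [Int.fract_div_intCast_eq_div_intCast_mod, hs]
  have hf2 : Int.fract (((ainv * (z : ℤ) : ℤ) : ℚ) / (b : ℚ)) = ((r : ℤ):ℚ) / (b:ℚ) := by
    rw [Int.fract_div_intCast_eq_div_intCast_mod]
  have haq : (a:ℚ) ≠ 0 := by positivity
  have hbq : (b:ℚ) ≠ 0 := by positivity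
  have hcast1 : (z:ℚ) = (a:ℚ) * ((r:ℤ):ℚ) + (b:ℚ) * ((m:ℤ):ℚ) := by exact_mod_cast hm
  have hcast2 : ((m:ℤ):ℚ) = (a:ℚ) * ((d:ℤ):ℚ) + ((m % a : ℤ):ℚ) := by exact_mod_cast hmd
  have hRHS : (z:ℚ) / ((a:ℚ) * b) - ((m % a : ℤ):ℚ)/(a:ℚ) - ((r:ℤ):ℚ)/(b:ℚ) + 1
      = ((d:ℤ):ℚ) + 1 := by
    rw [hcast1, hcast2]
    field_simp
    ring
  have hd1 : (0:ℤ) ≤ d + 1 := by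
    have hz' : (1:ℤ) ≤ (z:ℤ) := by exact_mod_cast hz
    have h1 : (a:ℤ) * r ≤ a * (b-1) := by
      apply mul_le_mul_of_nonneg_left (by omega) ha'.le
    have h4 : (b:ℤ) * (-(a:ℤ)) < b * m := by nlinarith
    have h5 : -(a:ℤ) < m := lt_of_mul_lt_mul_left h4 hb'.le
    have : (-1:ℤ) ≤ m / a := by
      rw [Int.le_ediv_iff_mul_le ha']
      linarith
    omega
  -- card bound via injection
  have hcardle : ((( Finset.Icc 1 n) ×ˢ (Finset.Icc 1 n) ×ˢ (Finset.Icc 1 n)).filter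
      (fun p => a * p.1 + b * p.2.1 = p.2.2 ∧ p.2.2 = z)).card ≤ (Finset.Icc (0:ℤ) d).card := by
    apply Finset.card_le_card_of_injOn (fun p => (((p.1:ℕ):ℤ) - r) / b)
    · intro p hp
      simp only [Finset.mem_coe, Finset.mem_filter, Finset.mem_product, Finset.mem_Icc] at hp
      obtain ⟨⟨⟨hx1, hx2⟩, ⟨hy1, hy2⟩, _⟩, heq, hpz⟩ := hp
      have hZ : (a:ℤ) * p.1 + b * p.2.1 = (z:ℤ) := by exact_mod_cast hpz ▸ heq
      have hbdx : (b:ℤ) ∣ (p.1:ℤ) - r := by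
        obtain ⟨c, hc⟩ := hbd1
        obtain ⟨e, he⟩ := hbd2
        exact ⟨p.1 * c + e - ainv * p.2.1, by linear_combination (p.1:ℤ) * hc + he + ainv * hZ⟩
      set k : ℤ := ((p.1:ℤ) - r) / b with hkdef
      have hk : (p.1:ℤ) = r + b * k := by
        have h := Int.ediv_mul_cancel hbdx
        linear_combination -h
      have hx1' : (1:ℤ) ≤ (p.1:ℤ) := by exact_mod_cast hx1
      have hk0 : 0 ≤ k := by
        have h4 : (b:ℤ) * (-1) < b * k := by linarith
        have := lt_of_mul_lt_mul_left h4 hb'.le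
        omega
      have hy1' : (1:ℤ) ≤ (p.2.1:ℤ) := by exact_mod_cast hy1
      have hby : (b:ℤ) * 1 ≤ b * p.2.1 := by
        apply mul_le_mul_of_nonneg_left hy1' hb'.le
      have habk : ((a:ℤ) * k) * b ≤ (m - 1) * b := by nlinarith
      have hak : (a:ℤ) * k ≤ m - 1 := le_of_mul_le_mul_right habk hb'
      have hkd : k ≤ d := by
        rw [hd, Int.le_ediv_iff_mul_le ha']
        linarith
      simp only [Finset.mem_coe, Finset.mem_Icc]
      exact ⟨hk0, hkd⟩
    · intro p hp q hq hfe
      simp only [Finset.coe_filter, Set.mem_setOf_eq, Finset.mem_product, Finset.mem_Icc] at hp hq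
      obtain ⟨⟨⟨hx1, hx2⟩, ⟨hy1, hy2⟩, _⟩, heqp, hpz⟩ := hp
      obtain ⟨⟨⟨hx1', hx2'⟩, ⟨hy1', hy2'⟩, _⟩, heqq, hqz⟩ := hq
      have hZp : (a:ℤ) * p.1 + b * p.2.1 = (z:ℤ) := by exact_mod_cast hpz ▸ heqp
      have hZq : (a:ℤ) * q.1 + b * q.2.1 = (z:ℤ) := by exact_mod_cast hqz ▸ heqq
      have hbdxp : (b:ℤ) ∣ (p.1:ℤ) - r := by
        obtain ⟨c, hc⟩ := hbd1
        obtain ⟨e, he⟩ := hbd2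
        exact ⟨p.1 * c + e - ainv * p.2.1, by linear_combination (p.1:ℤ) * hc + he + ainv * hZp⟩
      have hbdxq : (b:ℤ) ∣ (q.1:ℤ) - r := by
        obtain ⟨c, hc⟩ := hbd1
        obtain ⟨e, he⟩ := hbd2
        exact ⟨q.1 * c + e - ainv * q.2.1, by linear_combination (q.1:ℤ) * hc + he + ainv * hZq⟩
      have hkp : (p.1:ℤ) = r + b * (((p.1:ℤ) - r) / b) := by
        have h := Int.ediv_mul_cancel hbdxp
        linear_combination -h
      have hkq : (q.1:ℤ) = r + b * (((q.1:ℤ) - r) / b) := by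
        have h := Int.ediv_mul_cancel hbdxq
        linear_combination -h
      simp only at hfe
      have h1 : (p.1:ℤ) = (q.1:ℤ) := by rw [hkp, hkq, hfe]
      have h1' : p.1 = q.1 := by exact_mod_cast h1
      have h2 : (b:ℤ) * p.2.1 = (b:ℤ) * q.2.1 := by
        rw [h1] at hZp; linarith [hZp, hZq]
      have h2' : p.2.1 = q.2.1 := by
        have : (p.2.1:ℤ) = (q.2.1:ℤ) := by
          have := mul_left_cancel₀ hb'.ne' h2
          exact this
        exact_mod_cast this
      have h3' : p.2.2 = q.2.2 := by rw [hpz, hqz]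
      exact Prod.ext h1' (Prod.ext h2' h3')
  have hcards : (Finset.Icc (0:ℤ) d).card = (d + 1).toNat := by
    rw [Int.card_Icc]; congr 1; ring
  rw [hf1, hf2, hRHS]
  calc ((((Finset.Icc 1 n) ×ˢ (Finset.Icc 1 n) ×ˢ (Finset.Icc 1 n)).filter
      (fun p => a * p.1 + b * p.2.1 = p.2.2 ∧ p.2.2 = z)).card : ℚ)
      ≤ (((d+1).toNat : ℕ) : ℚ) := by exact_mod_cast hcards ▸ hcardle
    _ = ((d:ℤ):ℚ) + 1 := by
        rw [show (((d+1).toNat : ℕ) : ℚ) = (((d+1).toNat : ℤ) : ℚ) by push_cast; ring,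
          Int.toNat_of_nonneg hd1]; push_cast; ring

/-- For `a < b` with `gcd(a,b) = 1` and `E : a·x + b·y = z`, with `b⁻¹ = binv` an inverse
of `b` mod `a` and `a⁻¹ = ainv` an inverse of `a` mod `b`, for every `n ≥ 1` there is a
2-coloring of `[n]` whose number of monochromatic solutions is at most
`Σ_{z=a+b}^{⌊n/(a(a+b))⌋} ( z/(ab) − {binv·z/a} − {ainv·z/b} + 1 )`. -/
theorem stmt7 (a b : ℕ) (ha : 0 < a) (hb : 0 < b) (hab : a < b)
    (hgcd : Nat.gcd a b = 1)
    (binv ainv : ℤ)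
    (hbinv : (b : ℤ) * binv ≡ 1 [ZMOD (a : ℤ)])
    (hainv : (a : ℤ) * ainv ≡ 1 [ZMOD (b : ℤ)])
    (n : ℕ) (hn : 0 < n) :
    ∃ χ : ℕ → Fin 2,
      ((((Finset.Icc 1 n) ×ˢ (Finset.Icc 1 n) ×ˢ (Finset.Icc 1 n)).filter
        (fun p => a * p.1 + b * p.2.1 = p.2.2 ∧
          χ p.1 = χ p.2.1 ∧ χ p.2.1 = χ p.2.2)).card : ℚ)
      ≤ ∑ z ∈ Finset.Icc (a + b) (n / (a * (a + b))),
          ((z : ℚ) / ((a : ℚ) * b)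
            - Int.fract (((binv * (z : ℤ) : ℤ) : ℚ) / (a : ℚ))
            - Int.fract (((ainv * (z : ℤ) : ℤ) : ℚ) / (b : ℚ)) + 1) := by
  classical
  set t := n / (a * (a + b)) with ht
  have hapb : 0 < a + b := by omega
  have hpos : 0 < a * (a + b) := Nat.mul_pos ha hapb
  have hkey : n < (t + 1) * (a * (a + b)) := (Nat.div_lt_iff_lt_mul hpos).1 (Nat.lt_succ_self t)
  refine ⟨fun x => if x ≤ t ∨ (a + b) * (t + 1) ≤ x then 0 else 1, ?_⟩
  set χ : ℕ → Fin 2 := fun x => if x ≤ t ∨ (a + b) * (t + 1) ≤ x then 0 else 1 with hχ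
  have hiff : ∀ u v : ℕ, χ u = χ v →
      ((u ≤ t ∨ (a + b) * (t + 1) ≤ u) ↔ (v ≤ t ∨ (a + b) * (t + 1) ≤ v)) := by
    intro u v h
    by_cases h1 : u ≤ t ∨ (a + b) * (t + 1) ≤ u <;>
      by_cases h2 : v ≤ t ∨ (a + b) * (t + 1) ≤ v <;>
      simp [hχ, h1, h2] at h ⊢
  set S : ℕ → Finset (ℕ × ℕ × ℕ) := fun z =>
    (((Finset.Icc 1 n) ×ˢ (Finset.Icc 1 n) ×ˢ (Finset.Icc 1 n)).filter
      (fun p => a * p.1 + b * p.2.1 = p.2.2 ∧ p.2.2 = z)) with hS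
  have hsub : (((Finset.Icc 1 n) ×ˢ (Finset.Icc 1 n) ×ˢ (Finset.Icc 1 n)).filter
        (fun p => a * p.1 + b * p.2.1 = p.2.2 ∧
          χ p.1 = χ p.2.1 ∧ χ p.2.1 = χ p.2.2))
      ⊆ (Finset.Icc (a + b) t).biUnion S := by
    intro p hp
    simp only [Finset.mem_filter, Finset.mem_product, Finset.mem_Icc] at hp
    obtain ⟨⟨⟨hx1, hx2⟩, ⟨hy1, hy2⟩, hz1, hz2⟩, heq, hc1, hc2⟩ := hp
    have i1 := hiff _ _ hc1
    have i2 := hiff _ _ hc2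
    -- all three are "color 0"
    have hPx : p.1 ≤ t ∨ (a + b) * (t + 1) ≤ p.1 := by
      by_contra hcx
      have hcy := (not_iff_not.mpr i1).1 hcx
      have hcz := (not_iff_not.mpr i2).1 hcy
      push_neg at hcx hcy hcz
      have h1 : (a + b) * (t + 1) = a * (t + 1) + b * (t + 1) := by ring
      have h2 : a * (t + 1) ≤ a * p.1 := Nat.mul_le_mul_left a hcx.1
      have h3 : b * (t + 1) ≤ b * p.2.1 := Nat.mul_le_mul_left b hcy.1
      omega
    have hPy := i1.1 hPx
    have hPz := i2.1 hPy
    have hxt : p.1 ≤ t := by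
      rcases hPx with h | h
      · exact h
      · exfalso
        have h2 : a * ((a + b) * (t + 1)) ≤ a * p.1 := Nat.mul_le_mul_left a h
        have h3 : (t + 1) * (a * (a + b)) = a * ((a + b) * (t + 1)) := by ring
        have h4 : a * p.1 ≤ p.2.2 := heq ▸ Nat.le_add_right _ _
        omega
    have hyt : p.2.1 ≤ t := by
      rcases hPy with h | h
      · exact h
      · exfalso
        have h2 : b * ((a + b) * (t + 1)) ≤ b * p.2.1 := Nat.mul_le_mul_left b h
        have h3 : a * ((a + b) * (t + 1)) ≤ b * ((a + b) * (t + 1)) :=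
          Nat.mul_le_mul_right _ hab.le
        have h3' : (t + 1) * (a * (a + b)) = a * ((a + b) * (t + 1)) := by ring
        have h4 : b * p.2.1 ≤ p.2.2 := heq ▸ Nat.le_add_left _ _
        omega
    have hzt : p.2.2 ≤ t := by
      rcases hPz with h | h
      · exact h
      · exfalso
        have h2 : a * p.1 ≤ a * t := Nat.mul_le_mul_left a hxt
        have h3 : b * p.2.1 ≤ b * t := Nat.mul_le_mul_left b hyt
        have h4 : (a + b) * (t + 1) = a * t + b * t + (a + b) := by ring
        omega
    have hzge : a + b ≤ p.2.2 := by
      have h2 : a * 1 ≤ a * p.1 := Nat.mul_le_mul_left a hx1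
      have h3 : b * 1 ≤ b * p.2.1 := Nat.mul_le_mul_left b hy1
      omega
    refine Finset.mem_biUnion.mpr ⟨p.2.2, Finset.mem_Icc.mpr ⟨hzge, hzt⟩, ?_⟩
    refine Finset.mem_filter.mpr ⟨?_, heq, rfl⟩
    exact Finset.mem_product.mpr ⟨Finset.mem_Icc.mpr ⟨hx1, hx2⟩,
      Finset.mem_product.mpr ⟨Finset.mem_Icc.mpr ⟨hy1, hy2⟩, Finset.mem_Icc.mpr ⟨hz1, hz2⟩⟩⟩
  have hcard : ((((Finset.Icc 1 n) ×ˢ (Finset.Icc 1 n) ×ˢ (Finset.Icc 1 n)).filter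
        (fun p => a * p.1 + b * p.2.1 = p.2.2 ∧
          χ p.1 = χ p.2.1 ∧ χ p.2.1 = χ p.2.2)).card)
      ≤ ∑ z ∈ Finset.Icc (a + b) t, (S z).card :=
    le_trans (Finset.card_le_card hsub) (Finset.card_biUnion_le)
  calc ((((Finset.Icc 1 n) ×ˢ (Finset.Icc 1 n) ×ˢ (Finset.Icc 1 n)).filter
        (fun p => a * p.1 + b * p.2.1 = p.2.2 ∧
          χ p.1 = χ p.2.1 ∧ χ p.2.1 = χ p.2.2)).card : ℚ)
      ≤ ∑ z ∈ Finset.Icc (a + b) t, ((S z).card : ℚ) := by exact_mod_cast hcard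
    _ ≤ _ := by
        apply Finset.sum_le_sum
        intro z hz
        have hz0 : 0 < z := by
          have := (Finset.mem_Icc.mp hz).1
          omega
        exact perz_aux a b ha hb binv ainv hbinv hainv n z hz0
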